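/- For the Lie algebra s₁₁^α = (e¹⁶ − e²⁵, e¹⁵ + e²⁶, −e³⁶ − α e⁴⁵, α e³⁵ − e⁴⁶, 0, 0) with α ≠ 0, the coframe change f¹ = e³, f² = e⁴, f³ = e¹, f⁴ = e², f⁵ = α e⁵, f⁶ = −e⁶ defines a Lie algebra isomorphism s₁₁^α ≅ s₁₁^{1/α}; and for α = 1, swapping e³ and e⁴ gives an isomorphism s₁₁^1 ≅ s₁₂ = (e¹⁶ − e²⁵, e¹⁵ + e²⁶, −e³⁶ + e⁴⁵, −e³⁵ − e⁴⁶, 0, 0). -/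

import Mathlib

theorem auxExt18 {g h : Type*} [LieRing g] [LieAlgebra ℝ g] [LieRing h] [LieAlgebra ℝ h]
    (b : Module.Basis (Fin 6) ℝ g) (T : g →ₗ[ℝ] h)
    (H : ∀ i j, T ⁅b i, b j⁆ = ⁅T (b i), T (b j)⁆) (x y : g) :
    T ⁅x, y⁆ = ⁅T x, T y⁆ := by
  let L1 : g →ₗ[ℝ] g →ₗ[ℝ] h := LinearMap.mk₂ ℝ (fun x y => T ⁅x, y⁆)
    (fun m n p => by simp [add_lie]) (fun t m n => by simp [smul_lie])
    (fun m n p => by simp [lie_add]) (fun t m n => by simp [lie_smul])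
  let L2 : g →ₗ[ℝ] g →ₗ[ℝ] h := LinearMap.mk₂ ℝ (fun x y => ⁅T x, T y⁆)
    (fun m n p => by simp [add_lie]) (fun t m n => by simp [smul_lie])
    (fun m n p => by simp [lie_add]) (fun t m n => by simp [lie_smul])
  have heq : L1 = L2 := b.ext fun i => b.ext fun j => H i j
  exact LinearMap.congr_fun (LinearMap.congr_fun heq x) y

theorem auxBij18 {g h : Type*} [AddCommGroup g] [Module ℝ g] [AddCommGroup h] [Module ℝ h]
    (T : g →ₗ[ℝ] h) (S : h →ₗ[ℝ] g)
    (h1 : S.comp T = LinearMap.id) (h2 : T.comp S = LinearMap.id) : Function.Bijective T :=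
  Function.bijective_iff_has_inverse.2
    ⟨S, fun x => LinearMap.congr_fun h1 x, fun y => LinearMap.congr_fun h2 y⟩



theorem consFive18 {β : Type*} (a0 a1 a2 a3 a4 a5 : β) : ![a0,a1,a2,a3,a4,a5] 5 = a5 := rfl
theorem consFour18 {β : Type*} (a0 a1 a2 a3 a4 a5 : β) : ![a0,a1,a2,a3,a4,a5] 4 = a4 := rfl
theorem consFive18' {β : Type*} (a0 a1 a2 a3 a4 a5 : β) (h : 5 < 6) : ![a0,a1,a2,a3,a4,a5] ⟨5,h⟩ = a5 := rfl
theorem consFour18' {β : Type*} (a0 a1 a2 a3 a4 a5 : β) (h : 4 < 6) : ![a0,a1,a2,a3,a4,a5] ⟨4,h⟩ = a4 := rfl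

set_option maxHeartbeats 1000000 in
/-- For `s₁₁^α = (e¹⁶−e²⁵, e¹⁵+e²⁶, −e³⁶−αe⁴⁵, αe³⁵−e⁴⁶, 0, 0)` with
`α ≠ 0`, the coframe change `f¹ = e³, f² = e⁴, f³ = e¹, f⁴ = e², f⁵ = α e⁵, f⁶ = −e⁶`
gives a Lie algebra isomorphism `s₁₁^α ≅ s₁₁^{1/α}` (dual basis map:
`b₀ ↦ c₂, b₁ ↦ c₃, b₂ ↦ c₀, b₃ ↦ c₁, b₄ ↦ α c₄, b₅ ↦ −c₅`); and for `α = 1`,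
swapping `e³` and `e⁴` gives `s₁₁^1 ≅ s₁₂ = (e¹⁶−e²⁵, e¹⁵+e²⁶, −e³⁶+e⁴⁵, −e³⁵−e⁴⁶, 0, 0)`
(dual basis map `b₂ ↦ f₃, b₃ ↦ f₂`, identity on the others). -/
theorem stmt18 {g h k : Type*}
    [LieRing g] [LieAlgebra ℝ g] [LieRing h] [LieAlgebra ℝ h] [LieRing k] [LieAlgebra ℝ k]
    (α : ℝ) (hα : α ≠ 0)
    (b : Module.Basis (Fin 6) ℝ g) (c : Module.Basis (Fin 6) ℝ h) (f : Module.Basis (Fin 6) ℝ k)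
    -- s₁₁^α on g
    (hb04 : ⁅b 0, b 4⁆ = -b 1) (hb05 : ⁅b 0, b 5⁆ = -b 0)
    (hb14 : ⁅b 1, b 4⁆ = b 0) (hb15 : ⁅b 1, b 5⁆ = -b 1)
    (hb24 : ⁅b 2, b 4⁆ = -α • b 3) (hb25 : ⁅b 2, b 5⁆ = b 2)
    (hb34 : ⁅b 3, b 4⁆ = α • b 2) (hb35 : ⁅b 3, b 5⁆ = b 3)
    (hb45 : ⁅b 4, b 5⁆ = 0)
    (hb0 : ∀ i j : Fin 6, i ≠ 4 → i ≠ 5 → j ≠ 4 → j ≠ 5 → ⁅b i, b j⁆ = 0)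
    -- s₁₁^{1/α} on h
    (hc04 : ⁅c 0, c 4⁆ = -c 1) (hc05 : ⁅c 0, c 5⁆ = -c 0)
    (hc14 : ⁅c 1, c 4⁆ = c 0) (hc15 : ⁅c 1, c 5⁆ = -c 1)
    (hc24 : ⁅c 2, c 4⁆ = -α⁻¹ • c 3) (hc25 : ⁅c 2, c 5⁆ = c 2)
    (hc34 : ⁅c 3, c 4⁆ = α⁻¹ • c 2) (hc35 : ⁅c 3, c 5⁆ = c 3)
    (hc45 : ⁅c 4, c 5⁆ = 0)
    (hc0 : ∀ i j : Fin 6, i ≠ 4 → i ≠ 5 → j ≠ 4 → j ≠ 5 → ⁅c i, c j⁆ = 0)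
    -- s₁₂ on k
    (hf04 : ⁅f 0, f 4⁆ = -f 1) (hf05 : ⁅f 0, f 5⁆ = -f 0)
    (hf14 : ⁅f 1, f 4⁆ = f 0) (hf15 : ⁅f 1, f 5⁆ = -f 1)
    (hf24 : ⁅f 2, f 4⁆ = f 3) (hf25 : ⁅f 2, f 5⁆ = f 2)
    (hf34 : ⁅f 3, f 4⁆ = -f 2) (hf35 : ⁅f 3, f 5⁆ = f 3)
    (hf45 : ⁅f 4, f 5⁆ = 0)
    (hf0 : ∀ i j : Fin 6, i ≠ 4 → i ≠ 5 → j ≠ 4 → j ≠ 5 → ⁅f i, f j⁆ = 0) :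
    ((∀ x y : g, (b.constr ℝ ![c 2, c 3, c 0, c 1, α • c 4, -c 5]) ⁅x, y⁆ =
        ⁅(b.constr ℝ ![c 2, c 3, c 0, c 1, α • c 4, -c 5]) x,
          (b.constr ℝ ![c 2, c 3, c 0, c 1, α • c 4, -c 5]) y⁆) ∧
      Function.Bijective (b.constr ℝ ![c 2, c 3, c 0, c 1, α • c 4, -c 5])) ∧
    (α = 1 →
      (∀ x y : g, (b.constr ℝ ![f 0, f 1, f 3, f 2, f 4, f 5]) ⁅x, y⁆ =
        ⁅(b.constr ℝ ![f 0, f 1, f 3, f 2, f 4, f 5]) x,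
          (b.constr ℝ ![f 0, f 1, f 3, f 2, f 4, f 5]) y⁆) ∧
      Function.Bijective (b.constr ℝ ![f 0, f 1, f 3, f 2, f 4, f 5])) := by
  have hb40 : ⁅b 4, b 0⁆ = b 1 := by rw [← lie_skew, hb04] <;> simp
  have hb41 : ⁅b 4, b 1⁆ = -b 0 := by rw [← lie_skew, hb14] <;> simp
  have hb42 : ⁅b 4, b 2⁆ = α • b 3 := by rw [← lie_skew, hb24] <;> simp
  have hb43 : ⁅b 4, b 3⁆ = -(α • b 2) := by rw [← lie_skew, hb34] <;> simp
  have hb50 : ⁅b 5, b 0⁆ = b 0 := by rw [← lie_skew, hb05] <;> simp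
  have hb51 : ⁅b 5, b 1⁆ = b 1 := by rw [← lie_skew, hb15] <;> simp
  have hb52 : ⁅b 5, b 2⁆ = -b 2 := by rw [← lie_skew, hb25] <;> simp
  have hb53 : ⁅b 5, b 3⁆ = -b 3 := by rw [← lie_skew, hb35] <;> simp
  have hb54 : ⁅b 5, b 4⁆ = 0 := by rw [← lie_skew, hb45] <;> simp
  have hc40 : ⁅c 4, c 0⁆ = c 1 := by rw [← lie_skew, hc04] <;> simp
  have hc41 : ⁅c 4, c 1⁆ = -c 0 := by rw [← lie_skew, hc14] <;> simp
  have hc42 : ⁅c 4, c 2⁆ = α⁻¹ • c 3 := by rw [← lie_skew, hc24] <;> simp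
  have hc43 : ⁅c 4, c 3⁆ = -(α⁻¹ • c 2) := by rw [← lie_skew, hc34] <;> simp
  have hc50 : ⁅c 5, c 0⁆ = c 0 := by rw [← lie_skew, hc05] <;> simp
  have hc51 : ⁅c 5, c 1⁆ = c 1 := by rw [← lie_skew, hc15] <;> simp
  have hc52 : ⁅c 5, c 2⁆ = -c 2 := by rw [← lie_skew, hc25] <;> simp
  have hc53 : ⁅c 5, c 3⁆ = -c 3 := by rw [← lie_skew, hc35] <;> simp
  have hc54 : ⁅c 5, c 4⁆ = 0 := by rw [← lie_skew, hc45] <;> simp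
  have hf40 : ⁅f 4, f 0⁆ = f 1 := by rw [← lie_skew, hf04] <;> simp
  have hf41 : ⁅f 4, f 1⁆ = -f 0 := by rw [← lie_skew, hf14] <;> simp
  have hf42 : ⁅f 4, f 2⁆ = -f 3 := by rw [← lie_skew, hf24] <;> simp
  have hf43 : ⁅f 4, f 3⁆ = f 2 := by rw [← lie_skew, hf34] <;> simp
  have hf50 : ⁅f 5, f 0⁆ = f 0 := by rw [← lie_skew, hf05] <;> simp
  have hf51 : ⁅f 5, f 1⁆ = f 1 := by rw [← lie_skew, hf15] <;> simp
  have hf52 : ⁅f 5, f 2⁆ = -f 2 := by rw [← lie_skew, hf25] <;> simp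
  have hf53 : ⁅f 5, f 3⁆ = -f 3 := by rw [← lie_skew, hf35] <;> simp
  have hf54 : ⁅f 5, f 4⁆ = 0 := by rw [← lie_skew, hf45] <;> simp
  have hbz01 : ⁅b 0, b 1⁆ = 0 := hb0 0 1 (by decide) (by decide) (by decide) (by decide)
  have hbz02 : ⁅b 0, b 2⁆ = 0 := hb0 0 2 (by decide) (by decide) (by decide) (by decide)
  have hbz03 : ⁅b 0, b 3⁆ = 0 := hb0 0 3 (by decide) (by decide) (by decide) (by decide)
  have hbz10 : ⁅b 1, b 0⁆ = 0 := hb0 1 0 (by decide) (by decide) (by decide) (by decide)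
  have hbz12 : ⁅b 1, b 2⁆ = 0 := hb0 1 2 (by decide) (by decide) (by decide) (by decide)
  have hbz13 : ⁅b 1, b 3⁆ = 0 := hb0 1 3 (by decide) (by decide) (by decide) (by decide)
  have hbz20 : ⁅b 2, b 0⁆ = 0 := hb0 2 0 (by decide) (by decide) (by decide) (by decide)
  have hbz21 : ⁅b 2, b 1⁆ = 0 := hb0 2 1 (by decide) (by decide) (by decide) (by decide)
  have hbz23 : ⁅b 2, b 3⁆ = 0 := hb0 2 3 (by decide) (by decide) (by decide) (by decide)
  have hbz30 : ⁅b 3, b 0⁆ = 0 := hb0 3 0 (by decide) (by decide) (by decide) (by decide)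
  have hbz31 : ⁅b 3, b 1⁆ = 0 := hb0 3 1 (by decide) (by decide) (by decide) (by decide)
  have hbz32 : ⁅b 3, b 2⁆ = 0 := hb0 3 2 (by decide) (by decide) (by decide) (by decide)
  have hcz01 : ⁅c 0, c 1⁆ = 0 := hc0 0 1 (by decide) (by decide) (by decide) (by decide)
  have hcz02 : ⁅c 0, c 2⁆ = 0 := hc0 0 2 (by decide) (by decide) (by decide) (by decide)
  have hcz03 : ⁅c 0, c 3⁆ = 0 := hc0 0 3 (by decide) (by decide) (by decide) (by decide)
  have hcz10 : ⁅c 1, c 0⁆ = 0 := hc0 1 0 (by decide) (by decide) (by decide) (by decide)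
  have hcz12 : ⁅c 1, c 2⁆ = 0 := hc0 1 2 (by decide) (by decide) (by decide) (by decide)
  have hcz13 : ⁅c 1, c 3⁆ = 0 := hc0 1 3 (by decide) (by decide) (by decide) (by decide)
  have hcz20 : ⁅c 2, c 0⁆ = 0 := hc0 2 0 (by decide) (by decide) (by decide) (by decide)
  have hcz21 : ⁅c 2, c 1⁆ = 0 := hc0 2 1 (by decide) (by decide) (by decide) (by decide)
  have hcz23 : ⁅c 2, c 3⁆ = 0 := hc0 2 3 (by decide) (by decide) (by decide) (by decide)
  have hcz30 : ⁅c 3, c 0⁆ = 0 := hc0 3 0 (by decide) (by decide) (by decide) (by decide)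
  have hcz31 : ⁅c 3, c 1⁆ = 0 := hc0 3 1 (by decide) (by decide) (by decide) (by decide)
  have hcz32 : ⁅c 3, c 2⁆ = 0 := hc0 3 2 (by decide) (by decide) (by decide) (by decide)
  have hfz01 : ⁅f 0, f 1⁆ = 0 := hf0 0 1 (by decide) (by decide) (by decide) (by decide)
  have hfz02 : ⁅f 0, f 2⁆ = 0 := hf0 0 2 (by decide) (by decide) (by decide) (by decide)
  have hfz03 : ⁅f 0, f 3⁆ = 0 := hf0 0 3 (by decide) (by decide) (by decide) (by decide)
  have hfz10 : ⁅f 1, f 0⁆ = 0 := hf0 1 0 (by decide) (by decide) (by decide) (by decide)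
  have hfz12 : ⁅f 1, f 2⁆ = 0 := hf0 1 2 (by decide) (by decide) (by decide) (by decide)
  have hfz13 : ⁅f 1, f 3⁆ = 0 := hf0 1 3 (by decide) (by decide) (by decide) (by decide)
  have hfz20 : ⁅f 2, f 0⁆ = 0 := hf0 2 0 (by decide) (by decide) (by decide) (by decide)
  have hfz21 : ⁅f 2, f 1⁆ = 0 := hf0 2 1 (by decide) (by decide) (by decide) (by decide)
  have hfz23 : ⁅f 2, f 3⁆ = 0 := hf0 2 3 (by decide) (by decide) (by decide) (by decide)
  have hfz30 : ⁅f 3, f 0⁆ = 0 := hf0 3 0 (by decide) (by decide) (by decide) (by decide)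
  have hfz31 : ⁅f 3, f 1⁆ = 0 := hf0 3 1 (by decide) (by decide) (by decide) (by decide)
  have hfz32 : ⁅f 3, f 2⁆ = 0 := hf0 3 2 (by decide) (by decide) (by decide) (by decide)
  have hmul : α * α⁻¹ = 1 := mul_inv_cancel₀ hα
  have hmul' : α⁻¹ * α = 1 := inv_mul_cancel₀ hα
  refine ⟨⟨auxExt18 b _ ?_, ?_⟩, ?_⟩
  · intro i j
    fin_cases i <;> fin_cases j <;>
      simp [Module.Basis.constr_basis, Module.Basis.repr_self, Finsupp.single_apply, ite_smul, one_smul, zero_smul, Finset.sum_ite_eq, Finset.mem_univ, consFive18, consFour18, consFive18', consFour18', hb04, hb05, hb14, hb15, hb24, hb25, hb34, hb35, hb45, hb40, hb41, hb42, hb43, hb50, hb51, hb52, hb53, hb54, hbz01, hbz02, hbz03, hbz10, hbz12, hbz13, hbz20, hbz21, hbz23, hbz30, hbz31, hbz32, lie_self, hc04, hc05, hc14, hc15, hc24, hc25, hc34, hc35, hc45, hc40, hc41, hc42, hc43, hc50, hc51, hc52, hc53, hc54, hcz01, hcz02, hcz03, hcz10, hcz12, hcz13, hcz20, hcz21, hcz23,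 hcz30, hcz31, hcz32, smul_smul, hmul, hmul', neg_smul, smul_neg, lie_smul, smul_lie, lie_neg, neg_lie]
  · refine auxBij18 _ (c.constr ℝ ![b 2, b 3, b 0, b 1, α⁻¹ • b 4, -b 5]) ?_ ?_
    · apply b.ext; intro i
      fin_cases i <;>
        simp [Module.Basis.constr_basis, Module.Basis.repr_self, Finsupp.single_apply, ite_smul, one_smul, zero_smul, Finset.sum_ite_eq, Finset.mem_univ, consFive18, consFour18, consFive18', consFour18', smul_smul, hmul, hmul']
    · apply c.ext; intro i
      fin_cases i <;>
        simp [Module.Basis.constr_basis, Module.Basis.repr_self, Finsupp.single_apply, ite_smul, one_smul, zero_smul, Finset.sum_ite_eq, Finset.mem_univ, consFive18, consFour18, consFive18', consFour18', smul_smul, hmul, hmul']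
  · intro hα1
    subst hα1
    refine ⟨auxExt18 b _ ?_, ?_⟩
    · intro i j
      fin_cases i <;> fin_cases j <;>
        simp [Module.Basis.constr_basis, Module.Basis.repr_self, Finsupp.single_apply, ite_smul, one_smul, zero_smul, Finset.sum_ite_eq, Finset.mem_univ, consFive18, consFour18, consFive18', consFour18', hb04, hb05, hb14, hb15, hb24, hb25, hb34, hb35, hb45, hb40, hb41, hb42, hb43, hb50, hb51, hb52, hb53, hb54, hbz01, hbz02, hbz03, hbz10, hbz12, hbz13, hbz20, hbz21, hbz23, hbz30, hbz31, hbz32, lie_self, hf04, hf05, hf14, hf15, hf24, hf25, hf34, hf35, hf45, hf40, hf41, hf42, hf43, hf50, hf51, hf52, hf53, hf54, hfz01, hfz02, hfz03, hfz10, hfz12, hfz13, hfz20, hfz21, hfz23, hfz30, hfz31, hfz32]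
    · refine auxBij18 _ (f.constr ℝ ![b 0, b 1, b 3, b 2, b 4, b 5]) ?_ ?_
      · apply b.ext; intro i
        fin_cases i <;> simp [Module.Basis.constr_basis, consFive18]
      · apply f.ext; intro i
        fin_cases i <;> simp [Module.Basis.constr_basis, consFive18]
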